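/- arXiv:2001.00539 — 3 statements merged into one kernel-verified Lean document; each statement's English description precedes it below -/
import Mathlib

section
/- Let n ≥ 2, let G be a subgroup of (Z/nZ)^×, let d be a divisor of n with d < n, and let G' be the image of G under reduction modulo n/d (a subgroup of (Z/(n/d)Z)^×). For any s ∈ Z/nZ with gcd(s, n) = d, the set {g·s : g ∈ G} (products in Z/nZ) equals d · (G' · (s/d)), the coset of G' containing s/d in (Z/(n/d)Z)^×, scaled by d. In particular {g·s : g ∈ G} is contained in {a : gcd(a,n) = d}. -/
/-- For G ≤ (Z/nZ)ˣ, d ∣ n, d < n, G' the image of G mod n/d, and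
s with gcd(s,n) = d: the set G·s equals d · (G' · (s/d)), and is contained in
{a : gcd(a,n) = d}. -/
theorem stmt_5 (n : ℕ) (hn : 2 ≤ n) (G : Subgroup (ZMod n)ˣ)
    (d : ℕ) (hd : d ∣ n) (hdn : d < n)
    (s : ZMod n) (hs : Nat.gcd s.val n = d) :
    let G' : Subgroup (ZMod (n / d))ˣ :=
      Subgroup.map (Units.map (ZMod.castHom (Nat.div_dvd_of_dvd hd) (ZMod (n / d))).toMonoidHom) G
    ({x : ZMod n | ∃ g : (ZMod n)ˣ, g ∈ G ∧ x = (g : ZMod n) * s} =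
      (fun u : ZMod (n / d) => ((d * u.val : ℕ) : ZMod n)) ''
        {u : ZMod (n / d) | ∃ g' : (ZMod (n / d))ˣ, g' ∈ G' ∧
          u = (g' : ZMod (n / d)) * ((s.val / d : ℕ) : ZMod (n / d))}) ∧
    {x : ZMod n | ∃ g : (ZMod n)ˣ, g ∈ G ∧ x = (g : ZMod n) * s} ⊆
      {a : ZMod n | Nat.gcd a.val n = d} := by
  intro G'
  have hd0 : d ≠ 0 := by rintro rfl; exact absurd (Nat.eq_zero_of_zero_dvd hd) (by omega)
  have hmn : n = d * (n / d) := (Nat.mul_div_cancel' hd).symm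
  set m := n / d with hm_def
  have hm0 : m ≠ 0 := by rintro h; rw [h] at hmn; omega
  haveI : NeZero n := ⟨by omega⟩
  haveI : NeZero m := ⟨hm0⟩
  have hds : d ∣ s.val := hs ▸ Nat.gcd_dvd_left _ _
  have hst : s.val = d * (s.val / d) := (Nat.mul_div_cancel' hds).symm
  set t := s.val / d with ht_def
  set f := (ZMod.castHom (Nat.div_dvd_of_dvd hd) (ZMod m)).toMonoidHom with hf_def
  have hcoe : ∀ g : (ZMod n)ˣ,
      ((Units.map f g : (ZMod m)ˣ) : ZMod m) = (((g : ZMod n).val : ℕ) : ZMod m) := by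
    intro g
    simp [hf_def, ZMod.castHom_apply, ← ZMod.natCast_val]
  have key : ∀ g : (ZMod n)ˣ,
      ((d * ((((g : ZMod n).val : ZMod m)) * ((t : ℕ) : ZMod m)).val : ℕ) : ZMod n)
        = (g : ZMod n) * s := by
    intro g
    set a := (g : ZMod n).val with ha
    have h1 : (((a : ZMod m) * (t : ZMod m)).val) = (a * t) % m := by
      rw [← Nat.cast_mul, ZMod.val_natCast]
    rw [h1]
    have h2 : ((d * ((a * t) % m) : ℕ) : ZMod n) = ((d * (a * t) : ℕ) : ZMod n) := by
      rw [ZMod.natCast_eq_natCast_iff, Nat.ModEq]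
      conv_lhs => rw [hmn]
      conv_rhs => rw [hmn]
      rw [Nat.mul_mod_mul_left, Nat.mul_mod_mul_left, Nat.mod_mod_of_dvd _ dvd_rfl]
    rw [h2]
    have h3 : ((d * t : ℕ) : ZMod n) = s := by
      rw [← hst, ZMod.natCast_val, ZMod.cast_id]
    have h4 : ((a : ℕ) : ZMod n) = (g : ZMod n) := by
      rw [ha, ZMod.natCast_val, ZMod.cast_id]
    push_cast
    rw [show (d : ZMod n) * ((a : ZMod n) * (t : ZMod n))
        = (a : ZMod n) * ((d : ZMod n) * (t : ZMod n)) by ring]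
    push_cast at h3 h4
    rw [h3, h4]
  constructor
  · ext x
    constructor
    · rintro ⟨g, hg, rfl⟩
      exact ⟨(((g : ZMod n).val : ZMod m)) * ((t : ℕ) : ZMod m),
        ⟨Units.map f g, ⟨g, hg, rfl⟩, by rw [hcoe g]⟩, by beta_reduce; exact key g⟩
    · rintro ⟨u, ⟨g', ⟨g, hg, rfl⟩, rfl⟩, rfl⟩
      refine ⟨g, hg, ?_⟩
      beta_reduce
      rw [hcoe g]
      exact key g
  · rintro x ⟨g, hg, rfl⟩
    set a := (g : ZMod n).val with ha
    have h4 : (g : ZMod n) * s = ((a * s.val : ℕ) : ZMod n) := by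
      push_cast
      rw [ZMod.natCast_val, ZMod.cast_id, ZMod.natCast_val, ZMod.cast_id]
    have hval : ((g : ZMod n) * s).val = (a * s.val) % n := by
      rw [h4, ZMod.val_natCast]
    show Nat.gcd ((g : ZMod n) * s).val n = d
    rw [hval]
    have hcop : Nat.Coprime a n := ZMod.val_coe_unit_coprime g
    calc Nat.gcd ((a * s.val) % n) n = Nat.gcd n (a * s.val) := (Nat.gcd_rec n _).symm
      _ = Nat.gcd (a * s.val) n := Nat.gcd_comm _ _
      _ = Nat.gcd s.val n := hcop.gcd_mul_left_cancel _
      _ = d := hs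
end

section
/- Let G be a subgroup of (Z/nZ)^×, acting on Z/nZ by multiplication. Then each orbit of this action is contained in a single set {a : gcd(a,n) = d} for some divisor d of n, and within {a : gcd(a,n) = d}, the orbits are exactly the sets d·C where C ranges over the cosets of the image of G in (Z/(n/d)Z)^×. -/
/-- The orbits of Z/nZ under multiplication by a subgroup G of
(Z/nZ)ˣ preserve gcd with n, and within each gcd-level set {a : gcd(a,n) = d}
the orbits are exactly the sets d·C, C a coset of the image of G in (Z/(n/d)Z)ˣ. -/
theorem stmt_6 (n : ℕ) (hn : 2 ≤ n) (G : Subgroup (ZMod n)ˣ) :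
    let orbit : ZMod n → Set (ZMod n) :=
      fun s => {x : ZMod n | ∃ g : (ZMod n)ˣ, g ∈ G ∧ x = (g : ZMod n) * s}
    (∀ s : ZMod n, ∀ x ∈ orbit s, Nat.gcd x.val n = Nat.gcd s.val n) ∧
    (∀ d : ℕ, ∀ hd : d ∣ n, d < n →
      ((∀ s : ZMod n, Nat.gcd s.val n = d →
        orbit s = (fun u : ZMod (n / d) => ((d * u.val : ℕ) : ZMod n)) ''
          {u : ZMod (n / d) | ∃ g' : (ZMod (n / d))ˣ,
            g' ∈ Subgroup.map
              (Units.map (ZMod.castHom (Nat.div_dvd_of_dvd hd) (ZMod (n / d))).toMonoidHom) G ∧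
            u = (g' : ZMod (n / d)) * ((s.val / d : ℕ) : ZMod (n / d))}) ∧
      (∀ t : (ZMod (n / d))ˣ, ∃ s : ZMod n, Nat.gcd s.val n = d ∧
        orbit s = (fun u : ZMod (n / d) => ((d * u.val : ℕ) : ZMod n)) ''
          {u : ZMod (n / d) | ∃ g' : (ZMod (n / d))ˣ,
            g' ∈ Subgroup.map
              (Units.map (ZMod.castHom (Nat.div_dvd_of_dvd hd) (ZMod (n / d))).toMonoidHom) G ∧
            u = (g' : ZMod (n / d)) * (t : ZMod (n / d))}))) := by
  have hnz : NeZero n := ⟨by omega⟩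
  intro orbit
  constructor
  · rintro s x ⟨g, hg, rfl⟩
    have hcop : Nat.Coprime ((g : ZMod n)).val n := ZMod.val_coe_unit_coprime g
    rw [ZMod.val_mul]
    calc Nat.gcd (((g : ZMod n).val * s.val) % n) n
        = Nat.gcd ((g : ZMod n).val * s.val) n := by
          conv_rhs => rw [Nat.gcd_comm, Nat.gcd_rec]
      _ = Nat.gcd s.val n := Nat.Coprime.gcd_mul_left_cancel _ hcop
  · intro d hd hdlt
    have hd0 : 0 < d := Nat.pos_of_dvd_of_pos hd (by omega)
    have hmd : d * (n / d) = n := Nat.mul_div_cancel' hd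
    set m := n / d with hm
    have hm2 : 2 ≤ m := by nlinarith [hmd]
    have hmz : NeZero m := ⟨by omega⟩
    have key : ∀ s : ZMod n, Nat.gcd s.val n = d →
        orbit s = (fun u : ZMod m => ((d * u.val : ℕ) : ZMod n)) ''
          {u : ZMod m | ∃ g' : (ZMod m)ˣ,
            g' ∈ Subgroup.map
              (Units.map (ZMod.castHom (Nat.div_dvd_of_dvd hd) (ZMod m)).toMonoidHom) G ∧
            u = (g' : ZMod m) * ((s.val / d : ℕ) : ZMod m)} := by
      intro s hs
      have hds : d ∣ s.val := hs ▸ Nat.gcd_dvd_left _ _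
      have hs0 : d * (s.val / d) = s.val := Nat.mul_div_cancel' hds
      have main : ∀ g : (ZMod n)ˣ,
          ((d * (((Units.map (ZMod.castHom (Nat.div_dvd_of_dvd hd)
              (ZMod m)).toMonoidHom g : (ZMod m)ˣ) : ZMod m) *
              ((s.val / d : ℕ) : ZMod m)).val : ℕ) : ZMod n) = (g : ZMod n) * s := by
        intro g
        have hu : (((Units.map (ZMod.castHom (Nat.div_dvd_of_dvd hd)
            (ZMod m)).toMonoidHom g : (ZMod m)ˣ) : ZMod m) *
            ((s.val / d : ℕ) : ZMod m)) = (((g : ZMod n).val * (s.val / d) : ℕ) : ZMod m) := by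
          push_cast
          congr 1
          simp [ZMod.castHom_apply, ZMod.natCast_val]
        rw [hu, ZMod.val_natCast]
        have hgs : (g : ZMod n) * s = (((g : ZMod n).val * s.val : ℕ) : ZMod n) := by
          push_cast [ZMod.natCast_val, ZMod.cast_id]
          rfl
        rw [hgs, ZMod.natCast_eq_natCast_iff]
        have h1 : ((g : ZMod n).val * (s.val / d)) % m ≡ (g : ZMod n).val * (s.val / d) [MOD m] :=
          Nat.mod_modEq _ _
        have h2 := h1.mul_left' (c := d)
        rw [hmd] at h2
        calc d * (((g : ZMod n).val * (s.val / d)) % m)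
            ≡ d * ((g : ZMod n).val * (s.val / d)) [MOD n] := h2
          _ = (g : ZMod n).val * (d * (s.val / d)) := by ring
          _ = (g : ZMod n).val * s.val := by rw [hs0]
      ext x
      simp only [Set.mem_image, Set.mem_setOf_eq]
      constructor
      · rintro ⟨g, hg, rfl⟩
        exact ⟨_, ⟨Units.map _ g, ⟨g, hg, rfl⟩, rfl⟩, main g⟩
      · rintro ⟨u, ⟨g', ⟨g, hg, rfl⟩, rfl⟩, rfl⟩
        exact ⟨g, hg, main g⟩
    refine ⟨key, ?_⟩
    intro t
    have htc : Nat.Coprime (t : ZMod m).val m := ZMod.val_coe_unit_coprime t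
    have htlt : (t : ZMod m).val < m := ZMod.val_lt _
    have hval : (((d * (t : ZMod m).val : ℕ) : ZMod n)).val = d * (t : ZMod m).val := by
      rw [ZMod.val_natCast_of_lt]
      calc d * (t : ZMod m).val < d * m := (mul_lt_mul_iff_right₀ hd0).mpr htlt
        _ = n := hmd
    have hgcd : Nat.gcd (((d * (t : ZMod m).val : ℕ) : ZMod n)).val n = d := by
      have h3 : Nat.gcd (d * (t : ZMod m).val) (d * m) = d := by
        rw [Nat.gcd_mul_left, Nat.Coprime.gcd_eq_one htc, mul_one]
      rw [hmd] at h3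
      simp only [hval]
      exact h3
    refine ⟨((d * (t : ZMod m).val : ℕ) : ZMod n), hgcd, ?_⟩
    rw [key _ hgcd]
    have hdiv : (((d * (t : ZMod m).val : ℕ) : ZMod n)).val / d = (t : ZMod m).val := by
      rw [hval, Nat.mul_div_cancel_left _ hd0]
    rw [hdiv]
    have hback : (((t : ZMod m).val : ℕ) : ZMod m) = (t : ZMod m) := by
      simp [ZMod.natCast_val, ZMod.cast_id]
    rw [hback]
end

section
/- Let F be a finite field, S* a subgroup of F^×, and a, b, a', b' ∈ F such that a + b and a' + b' lie in the same coset of S* in F (i.e., either both are 0, or both are nonzero with (a+b)/(a'+b') ∈ S*). With γ uniform on S* and z uniform on F independent, the joint distribution of (γ·a + z, γ·b - z) equals the joint distribution of (γ·a' + z, γ·b' - z). -/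
lemma stmt_10_aux (F : Type*) [Field F] (S : Subgroup Fˣ) (a b a' b' : F)
    (s : Fˣ) (hs : s ∈ S) (hab : a + b = (a' + b') * (s : F)) (x y : F) :
    Nat.card {ω : ↥S × F // ((ω.1 : Fˣ) : F) * a + ω.2 = x ∧
          ((ω.1 : Fˣ) : F) * b - ω.2 = y} =
        Nat.card {ω : ↥S × F // ((ω.1 : Fˣ) : F) * a' + ω.2 = x ∧
          ((ω.1 : Fˣ) : F) * b' - ω.2 = y} := by
  have hab' : a' + b' = (a + b) * ((s⁻¹ : Fˣ) : F) := by
    rw [hab]; field_simp; rw [mul_assoc, Units.mul_inv, mul_one]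
  apply Nat.card_congr
  refine
    { toFun := fun ω => ⟨(ω.1.1 * ⟨s, hs⟩, x - ((ω.1.1 : Fˣ) : F) * (s : F) * a'), ?_, ?_⟩
      invFun := fun ω => ⟨(ω.1.1 * ⟨s⁻¹, S.inv_mem hs⟩,
        x - ((ω.1.1 : Fˣ) : F) * ((s⁻¹ : Fˣ) : F) * a), ?_, ?_⟩
      left_inv := ?_
      right_inv := ?_ }
  · push_cast; ring
  · obtain ⟨⟨γ, z⟩, h1, h2⟩ := ω
    have key : ((γ : Fˣ) : F) * (a + b) = x + y := by
      rw [mul_add]; rw [← h1, ← h2]; ring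
    push_cast
    have : ((γ : Fˣ) : F) * (s : F) * b' - (x - ((γ : Fˣ) : F) * (s : F) * a')
        = ((γ : Fˣ) : F) * ((a' + b') * (s : F)) - x := by ring
    rw [this, ← hab, key]; ring
  · push_cast; ring
  · obtain ⟨⟨γ, z⟩, h1, h2⟩ := ω
    have key : ((γ : Fˣ) : F) * (a' + b') = x + y := by
      rw [mul_add]; rw [← h1, ← h2]; ring
    push_cast
    have : ((γ : Fˣ) : F) * ((s : F))⁻¹ * b -
        (x - ((γ : Fˣ) : F) * ((s : F))⁻¹ * a)
        = ((γ : Fˣ) : F) * ((a + b) * ((s : F))⁻¹) - x := by ring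
    rw [this]
    have h2 : (a + b) * ((s : F))⁻¹ = a' + b' := by
      rw [hab']; push_cast; ring
    rw [h2, key]; ring
  · rintro ⟨⟨γ, z⟩, h1, h2⟩
    ext
    · push_cast; field_simp
    · push_cast
      have : ((γ : Fˣ) : F) * (s : F) * ((s : F))⁻¹ * a = ((γ : Fˣ) : F) * a := by
        field_simp
      rw [this, ← h1]; ring
  · rintro ⟨⟨γ, z⟩, h1, h2⟩
    ext
    · push_cast; field_simp
    · push_cast
      have : ((γ : Fˣ) : F) * ((s : F))⁻¹ * (s : F) * a' = ((γ : Fˣ) : F) * a' := by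
        field_simp
      rw [this, ← h1]; ring

/-- If a+b and a'+b' lie in the same coset of the subgroup S* of
Fˣ (both zero, or both nonzero with ratio in S*), then (γa+z, γb-z) and
(γa'+z, γb'-z) are identically distributed (γ uniform on S*, z uniform on F,
independent); expressed by equality of outcome counts over Ω = S* × F. -/
theorem stmt_10 (F : Type*) [Field F] [Fintype F] (S : Subgroup Fˣ) (a b a' b' : F)
    (h : (a + b = 0 ∧ a' + b' = 0) ∨
      (a + b ≠ 0 ∧ a' + b' ≠ 0 ∧ ∃ s : Fˣ, s ∈ S ∧ a + b = (a' + b') * (s : F))) :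
    ∀ x y : F,
      Nat.card {ω : ↥S × F // ((ω.1 : Fˣ) : F) * a + ω.2 = x ∧
          ((ω.1 : Fˣ) : F) * b - ω.2 = y} =
        Nat.card {ω : ↥S × F // ((ω.1 : Fˣ) : F) * a' + ω.2 = x ∧
          ((ω.1 : Fˣ) : F) * b' - ω.2 = y} := by
  intro x y
  rcases h with ⟨h1, h2⟩ | ⟨-, -, s, hs, hab⟩
  · exact stmt_10_aux F S a b a' b' 1 S.one_mem (by rw [h1, h2]; simp) x y
  · exact stmt_10_aux F S a b a' b' s hs hab x y
end
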